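/- For every τ ∈ (0, 1/4): the quartic polynomial q₁ has four distinct complex roots, exactly two of which are real, and the two nonreal roots are complex conjugates of each other; moreover the unique root b_* = (3(1−4τ))^{−1/3} of q₂ is a root of q₁ if and only if τ = 1/12. -/

import Mathlib

noncomputable section

/-- The constant `c = −(243(1−4τ)²/64)^{1/3}` (real cube root). -/
def ccf (τ : ℝ) : ℝ := -(243 * (1 - 4 * τ) ^ 2 / 64) ^ ((1 : ℝ) / 3)

/-- `R(z) = 3z⁴ − 3z − c`. -/
def RR (τ : ℝ) (z : ℂ) : ℂ := 3 * z ^ 4 - 3 * z - (ccf τ : ℂ)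

/-- `D(z) = −2z⁶ + 3z³ + cz² − 3τ`. -/
def DD (τ : ℝ) (z : ℂ) : ℂ :=
  -2 * z ^ 6 + 3 * z ^ 3 + (ccf τ : ℂ) * z ^ 2 - 3 * (τ : ℂ)

/-- The quartic `q₁`. -/
def q1 (τ : ℝ) (z : ℂ) : ℂ :=
  ((256 / (3 : ℝ) ^ ((5 : ℝ) / 3) * (1 - 4 * τ) ^ ((1 : ℝ) / 3) : ℝ) : ℂ) * z ^ 4
    + (128 / 9 : ℂ) * z ^ 3
    + ((16 / (3 : ℝ) ^ ((1 : ℝ) / 3) * (1 - 4 * τ) ^ ((2 : ℝ) / 3) : ℝ) : ℂ) * z ^ 2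
    - ((32 * (3 : ℝ) ^ ((1 : ℝ) / 3) * (1 - 4 * τ) ^ ((1 : ℝ) / 3) : ℝ) : ℂ) * z
    + ((16 * (1 - 8 * τ) : ℝ) : ℂ)

/-- The linear factor `q₂`. -/
def q2 (τ : ℝ) (z : ℂ) : ℂ :=
  (((3 : ℝ) ^ ((1 : ℝ) / 3) * (1 - 4 * τ) ^ ((1 : ℝ) / 3) : ℝ) : ℂ) * z - 1

/-- The double point `b_* = (3(1−4τ))^{−1/3}`. -/
def bstar (τ : ℝ) : ℝ := (3 * (1 - 4 * τ)) ^ (-(1 : ℝ) / 3)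

/-- The normalized quartic `Q(u) = 16u⁴+8u³+3tu²−18tu+6t²−9t`. -/
def fQ (t u : ℝ) : ℝ := 16*u^4+8*u^3+3*t*u^2-18*t*u+6*t^2-9*t

lemma fQ_hasDeriv (t u : ℝ) : HasDerivAt (fQ t) (64*u^3+24*u^2+6*t*u-18*t) u := by
  have h4 : HasDerivAt (fun x : ℝ => x^4) (4*u^3) u := by simpa using hasDerivAt_pow 4 u
  have h3 : HasDerivAt (fun x : ℝ => x^3) (3*u^2) u := by simpa using hasDerivAt_pow 3 u
  have h2 : HasDerivAt (fun x : ℝ => x^2) (2*u) u := by simpa using hasDerivAt_pow 2 u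
  have h1 : HasDerivAt (fun x : ℝ => x) (1:ℝ) u := hasDerivAt_id u
  have H := ((((h4.const_mul (16:ℝ)).add (h3.const_mul (8:ℝ))).add
      (h2.const_mul (3*t))).sub (h1.const_mul (18*t))).add_const (6*t^2-9*t)
  have hh : HasDerivAt (fun x : ℝ => 16*x^4+8*x^3+3*t*x^2-18*t*x+(6*t^2-9*t))
      (16*(4*u^3)+8*(3*u^2)+3*t*(2*u)-18*t*1) u := H
  have hfun : fQ t = fun x : ℝ => 16*x^4+8*x^3+3*t*x^2-18*t*x+(6*t^2-9*t) := by
    funext x; unfold fQ; ring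
  rw [hfun]
  convert hh using 1
  ring

lemma fQ_cont (t : ℝ) : Continuous (fQ t) := by
  rw [continuous_iff_continuousAt]
  exact fun u => (fQ_hasDeriv t u).differentiableAt.continuousAt

/-- At every real critical point the normalized quartic is negative. -/
lemma crit_neg {t : ℝ} (ht0 : 0 < t) (ht3 : t < 3) {u : ℝ}
    (h : 64*u^3+24*u^2+6*t*u-18*t = 0) : fQ t u < 0 := by
  have hu3 : u < 3 := by
    by_contra hc
    push_neg at hc
    have h0u : (0:ℝ) ≤ u := by linarith
    nlinarith [mul_nonneg ht0.le (by linarith : (0:ℝ) ≤ u - 3),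
      mul_nonneg (mul_nonneg h0u h0u) (by linarith : (0:ℝ) ≤ u - 3), sq_nonneg u]
  have hu0 : u ≠ 0 := by
    intro h0
    rw [h0] at h
    norm_num at h
    linarith
  have hu38 : -3/8 < u := by
    by_contra hc
    push_neg at hc
    have a1 : 0 ≤ u^2 * (-(8*u+3)) := mul_nonneg (sq_nonneg u) (by linarith)
    have a2 : 0 < t * (3-u) := mul_pos ht0 (by linarith)
    nlinarith [a1, a2, h]
  have hu34 : u < 3/4 := by
    by_contra hc
    push_neg at hc
    have b1 : 0 ≤ (4*u-3) * (8*u^2+9*u+9) := mul_nonneg (by linarith) (by positivity)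
    have b2 : 0 < (3-t)*(3-u) := mul_pos (by linarith) (by linarith)
    nlinarith [b1, b2, h]
  have key : 36*(3-u)^2 * fQ t u = 48*u^2*(4*u-3)*(5*u+3)^3
      - (64*u^3+24*u^2+6*t*u-18*t) * (36*t*(3-u) + 6*(64*u^3+24*u^2) + 6*(3-u)*(3*u^2-18*u-9)) := by
    unfold fQ; ring
  rw [h] at key
  have hneg : 48*u^2*(4*u-3)*(5*u+3)^3 < 0 := by
    have h1 : 0 < u^2 := lt_of_le_of_ne (sq_nonneg u) (Ne.symm (pow_ne_zero 2 hu0))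
    have h2 : 4*u-3 < 0 := by linarith
    have h53 : (0:ℝ) < 5*u+3 := by linarith
    have h3 : 0 < (5*u+3)^3 := by positivity
    nlinarith [mul_pos h1 h3, h2]
  by_contra hge
  push_neg at hge
  nlinarith [mul_nonneg (by positivity : (0:ℝ) ≤ 36*(3-u)^2) hge, key, hneg]

/-- The normalized quartic cannot have three distinct real zeros. -/
lemma no_three {t : ℝ} (ht0 : 0 < t) (ht3 : t < 3) {x y z : ℝ}
    (hxy : x < y) (hyz : y < z) (hx : fQ t x = 0) (hy : fQ t y = 0) (hz : fQ t z = 0) :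
    False := by
  have hxz : x ≤ z := by linarith
  obtain ⟨c, hc, hmax⟩ := isCompact_Icc.exists_isMaxOn (Set.nonempty_Icc.mpr hxz)
    (fQ_cont t).continuousOn
  have key : ∀ d, d ∈ Set.Ioo x z → IsMaxOn (fQ t) (Set.Icc x z) d → False := by
    intro d hd hdmax
    have hloc : IsLocalMax (fQ t) d := hdmax.isLocalMax (Icc_mem_nhds hd.1 hd.2)
    have hder : 64*d^3+24*d^2+6*t*d-18*t = 0 := hloc.hasDerivAt_eq_zero (fQ_hasDeriv t d)
    have hneg := crit_neg ht0 ht3 hder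
    have hyd : fQ t y ≤ fQ t d := hdmax ⟨hxy.le, hyz.le⟩
    rw [hy] at hyd
    linarith
  rcases lt_or_ge x c with h1 | h1
  · rcases lt_or_ge c z with h2 | h2
    · exact key c ⟨h1, h2⟩ hmax
    · have hcz : c = z := le_antisymm hc.2 h2
      refine key y ⟨hxy, hyz⟩ (fun u hu => ?_)
      have := hmax hu
      simp only [Set.mem_setOf_eq] at this ⊢
      rw [hy]; rw [hcz, hz] at this; exact this
  · have hcx : c = x := le_antisymm h1 hc.1
    refine key y ⟨hxy, hyz⟩ (fun u hu => ?_)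
    have := hmax hu
    simp only [Set.mem_setOf_eq] at this ⊢
    rw [hy]; rw [hcx, hx] at this; exact this

lemma exists_two_roots {t : ℝ} (ht0 : 0 < t) (ht3 : t < 3) :
    ∃ r₁ r₂ : ℝ, fQ t r₁ = 0 ∧ fQ t r₂ = 0 ∧ r₁ < t/4 ∧ t/4 < r₂ := by
  have hmid : fQ t (t/4) < 0 := by
    have h1 : 0 < t * (3 - t) * (t^2+8*t+48) :=
      mul_pos (mul_pos ht0 (by linarith)) (by positivity)
    have h2 : fQ t (t/4) = -(t*(3-t)*(t^2+8*t+48))/16 := by unfold fQ; ring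
    rw [h2]; linarith
  have hleft : 0 < fQ t (-10) := by unfold fQ; nlinarith [sq_nonneg t]
  have hright : 0 < fQ t 10 := by unfold fQ; nlinarith [sq_nonneg t]
  have hab : (-10 : ℝ) ≤ t/4 := by linarith
  have hbc : t/4 ≤ (10 : ℝ) := by linarith
  have i1 := intermediate_value_Ioo' hab (fQ_cont t).continuousOn
  have i2 := intermediate_value_Ioo hbc (fQ_cont t).continuousOn
  obtain ⟨r₁, hr₁mem, hr₁⟩ := i1 ⟨hmid, hleft⟩
  obtain ⟨r₂, hr₂mem, hr₂⟩ := i2 ⟨hmid, hright⟩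
  exact ⟨r₁, r₂, hr₁, hr₂, hr₁mem.2, hr₂mem.1⟩

/-- Full description of the complex roots of the normalized quartic. -/
lemma master {t : ℝ} (ht0 : 0 < t) (ht3 : t < 3) :
    ∃ (r₁ r₂ : ℝ) (w : ℂ), r₁ ≠ r₂ ∧ w.im ≠ 0 ∧ ∀ z : ℂ,
      16*z^4 + 8*z^3 + 3*(t:ℂ)*z^2 - 18*(t:ℂ)*z + (6*(t:ℂ)^2 - 9*(t:ℂ)) = 0 ↔
        (z = (r₁:ℂ) ∨ z = (r₂:ℂ) ∨ z = w ∨ z = (starRingEnd ℂ) w) := by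
  obtain ⟨r₁, r₂, hr₁, hr₂, hr₁lt, hr₂lt⟩ := exists_two_roots ht0 ht3
  have hlt : r₁ < r₂ := hr₁lt.trans hr₂lt
  have hne : r₁ ≠ r₂ := ne_of_lt hlt
  set p : ℝ := 1/2 + r₁ + r₂ with hpdef
  set q : ℝ := 3*t/16 + p*(r₁+r₂) - r₁*r₂ with hqdef
  have hp : (8:ℝ) = 16*(p - r₁ - r₂) := by rw [hpdef]; ring
  have hq : 3*t = 16*(q - p*(r₁+r₂) + r₁*r₂) := by rw [hqdef]; ring
  set d1 : ℝ := -18*t - 16*(-(q*(r₁+r₂)) + p*r₁*r₂) with hd1def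
  set d0 : ℝ := (6*t^2-9*t) - 16*q*r₁*r₂ with hd0def
  have hid : ∀ u : ℝ, fQ t u = 16*(u-r₁)*(u-r₂)*(u^2+p*u+q) + d1*u + d0 := by
    intro u
    unfold fQ
    rw [hd1def, hd0def]
    linear_combination u^3 * hp + u^2 * hq
  have e1 : d1*r₁ + d0 = 0 := by
    have h := hid r₁; rw [hr₁] at h; linear_combination -h
  have e2 : d1*r₂ + d0 = 0 := by
    have h := hid r₂; rw [hr₂] at h; linear_combination -h
  have hd1 : d1 = 0 := by
    have h3 : d1 * (r₁ - r₂) = 0 := by linear_combination e1 - e2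
    rcases mul_eq_zero.mp h3 with h | h
    · exact h
    · exact absurd (sub_eq_zero.mp h) hne
  have hd0 : d0 = 0 := by linear_combination e1 - r₁ * hd1
  have hA : -18*t = 16*(-(q*(r₁+r₂)) + p*r₁*r₂) := by
    have := hd1; rw [hd1def] at this; linarith
  have hB : 6*t^2-9*t = 16*q*r₁*r₂ := by
    have := hd0; rw [hd0def] at this; linarith
  have hfact : ∀ u : ℝ, fQ t u = 16*(u-r₁)*(u-r₂)*(u^2+p*u+q) := by
    intro u
    unfold fQ
    linear_combination u^3 * hp + u^2 * hq + u * hA + hB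
  have hdisc : p^2 - 4*q < 0 := by
    by_contra hge
    push_neg at hge
    set x : ℝ := (-p + Real.sqrt (p^2-4*q))/2 with hxdef
    have hs : (Real.sqrt (p^2-4*q))^2 = p^2-4*q := Real.sq_sqrt hge
    have hx : x^2 + p*x + q = 0 := by
      rw [hxdef]; linear_combination (1/4) * hs
    have hfx : fQ t x = 0 := by
      rw [hfact x, hx]; ring
    have hcase : x = r₁ ∨ x = r₂ ∨ (x ≠ r₁ ∧ x ≠ r₂) := by tauto
    rcases hcase with hxr | hxr | ⟨hne1, hne2⟩
    · rw [hxr] at hx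
      have hcrit : 64*r₁^3+24*r₁^2+6*t*r₁-18*t = 0 := by
        linear_combination (3*r₁^2) * hp + (2*r₁) * hq + hA + 16*(r₁-r₂) * hx
      have := crit_neg ht0 ht3 hcrit
      rw [hr₁] at this; exact absurd this (lt_irrefl 0)
    · rw [hxr] at hx
      have hcrit : 64*r₂^3+24*r₂^2+6*t*r₂-18*t = 0 := by
        linear_combination (3*r₂^2) * hp + (2*r₂) * hq + hA + 16*(r₂-r₁) * hx
      have := crit_neg ht0 ht3 hcrit
      rw [hr₂] at this; exact absurd this (lt_irrefl 0)
    · rcases lt_trichotomy x r₁ with h | h | h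
      · exact no_three ht0 ht3 h hlt hfx hr₁ hr₂
      · exact absurd h hne1
      · rcases lt_trichotomy x r₂ with h' | h' | h'
        · exact no_three ht0 ht3 h h' hr₁ hfx hr₂
        · exact absurd h' hne2
        · exact no_three ht0 ht3 hlt h' hr₁ hr₂ hfx
  set im : ℝ := Real.sqrt (4*q - p^2) with himdef
  have himpos : 0 < im := Real.sqrt_pos.mpr (by linarith)
  have hsq : im^2 = 4*q - p^2 := Real.sq_sqrt (by linarith)
  set w : ℂ := ((-p/2 : ℝ) : ℂ) + ((im/2 : ℝ) : ℂ) * Complex.I with hwdef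
  have hwim : w.im = im/2 := by
    rw [hwdef]; simp
  have hwim0 : w.im ≠ 0 := by rw [hwim]; positivity
  have hconj : (starRingEnd ℂ) w = ((-p/2 : ℝ) : ℂ) - ((im/2 : ℝ) : ℂ) * Complex.I := by
    rw [hwdef]
    simp only [map_add, map_mul, Complex.conj_ofReal, Complex.conj_I]
    ring
  have hsqC : ((im:ℂ))^2 = 4*(q:ℂ) - (p:ℂ)^2 := by
    exact_mod_cast congrArg (fun y : ℝ => (y:ℂ)) hsq
  have hquad : ∀ z : ℂ, (z - w) * (z - (starRingEnd ℂ) w) = z^2 + (p:ℂ)*z + (q:ℂ) := by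
    intro z
    rw [hconj, hwdef]
    push_cast
    have hI : (Complex.I)^2 = -1 := Complex.I_sq
    linear_combination (1/4 : ℂ) * hsqC - ((im:ℂ)^2/4) * hI
  have hpC : (8:ℂ) = 16*((p:ℂ) - (r₁:ℂ) - (r₂:ℂ)) := by
    exact_mod_cast congrArg (fun y : ℝ => (y:ℂ)) hp
  have hqC : 3*(t:ℂ) = 16*((q:ℂ) - (p:ℂ)*((r₁:ℂ)+(r₂:ℂ)) + (r₁:ℂ)*(r₂:ℂ)) := by
    exact_mod_cast congrArg (fun y : ℝ => (y:ℂ)) hq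
  have hAC : -18*(t:ℂ) = 16*(-((q:ℂ)*((r₁:ℂ)+(r₂:ℂ))) + (p:ℂ)*(r₁:ℂ)*(r₂:ℂ)) := by
    exact_mod_cast congrArg (fun y : ℝ => (y:ℂ)) hA
  have hBC : 6*(t:ℂ)^2-9*(t:ℂ) = 16*(q:ℂ)*(r₁:ℂ)*(r₂:ℂ) := by
    exact_mod_cast congrArg (fun y : ℝ => (y:ℂ)) hB
  have hfactC : ∀ z : ℂ, 16*z^4 + 8*z^3 + 3*(t:ℂ)*z^2 - 18*(t:ℂ)*z + (6*(t:ℂ)^2 - 9*(t:ℂ))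
      = 16*(z-(r₁:ℂ))*(z-(r₂:ℂ))*((z - w) * (z - (starRingEnd ℂ) w)) := by
    intro z
    rw [hquad z]
    linear_combination z^3 * hpC + z^2 * hqC + z * hAC + hBC
  refine ⟨r₁, r₂, w, hne, hwim0, fun z => ?_⟩
  rw [hfactC z]
  constructor
  · intro h
    rcases mul_eq_zero.mp h with h | h
    · rcases mul_eq_zero.mp h with h | h
      · rcases mul_eq_zero.mp h with h | h
        · norm_num at h
        · exact Or.inl (sub_eq_zero.mp h)
      · exact Or.inr (Or.inl (sub_eq_zero.mp h))
    · rcases mul_eq_zero.mp h with h | h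
      · exact Or.inr (Or.inr (Or.inl (sub_eq_zero.mp h)))
      · exact Or.inr (Or.inr (Or.inr (sub_eq_zero.mp h)))
  · intro h
    rcases h with h | h | h | h <;> rw [h] <;> ring

/-- For every `τ ∈ (0, 1/4)`, the quartic `q₁` has four distinct complex
roots, exactly two of which are real, and the two nonreal roots are complex conjugates;
moreover the root `b_* = (3(1−4τ))^{−1/3}` of `q₂` is a root of `q₁` iff `τ = 1/12`. -/
theorem q1_roots (τ : ℝ) (hτ : τ ∈ Set.Ioo (0 : ℝ) (1 / 4)) :
    (∃ (r₁ r₂ : ℝ) (w : ℂ), r₁ ≠ r₂ ∧ w.im ≠ 0 ∧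
      ∀ z : ℂ, q1 τ z = 0 ↔ z = (r₁ : ℂ) ∨ z = (r₂ : ℂ) ∨ z = w ∨ z = (starRingEnd ℂ) w) ∧
    (q1 τ ((bstar τ : ℝ) : ℂ) = 0 ↔ τ = 1 / 12) := by
  obtain ⟨hτ0, hτ4⟩ := hτ
  have hx : (0:ℝ) < 1 - 4*τ := by linarith
  have h3x : (0:ℝ) < 3*(1-4*τ) := by linarith
  set s : ℝ := (3*(1-4*τ))^((1:ℝ)/3) with hsdef
  have hspos : 0 < s := Real.rpow_pos_of_pos h3x _
  have hs3 : s^(3:ℕ) = 3*(1-4*τ) := by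
    rw [hsdef, ← Real.rpow_natCast ((3*(1-4*τ))^((1:ℝ)/3)) 3, ← Real.rpow_mul h3x.le]
    norm_num
  have hsplit : s = (3:ℝ)^((1:ℝ)/3) * (1-4*τ)^((1:ℝ)/3) := by
    rw [hsdef, Real.mul_rpow (by norm_num) hx.le]
  have h13pos : (0:ℝ) < (3:ℝ)^((1:ℝ)/3) := Real.rpow_pos_of_pos (by norm_num) _
  have h53pos : (0:ℝ) < (3:ℝ)^((5:ℝ)/3) := Real.rpow_pos_of_pos (by norm_num) _
  have h9 : (3:ℝ)^((5:ℝ)/3) * (3:ℝ)^((1:ℝ)/3) = 9 := by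
    rw [← Real.rpow_add (by norm_num : (0:ℝ) < 3)]
    rw [show (5:ℝ)/3 + 1/3 = ((2:ℕ):ℝ) by norm_num, Real.rpow_natCast]
    norm_num
  have h23 : (1-4*τ)^((2:ℝ)/3) = ((1-4*τ)^((1:ℝ)/3))^(2:ℕ) := by
    rw [← Real.rpow_natCast ((1-4*τ)^((1:ℝ)/3)) 2, ← Real.rpow_mul hx.le]
    norm_num
  have h3cube : ((3:ℝ)^((1:ℝ)/3))^(2:ℕ) * (3:ℝ)^((1:ℝ)/3) = 3 := by
    rw [← Real.rpow_natCast ((3:ℝ)^((1:ℝ)/3)) 2, ← Real.rpow_mul (by norm_num : (0:ℝ) ≤ 3),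
      ← Real.rpow_add (by norm_num : (0:ℝ) < 3)]
    rw [show (1:ℝ)/3 * (2:ℕ) + 1/3 = ((1:ℕ):ℝ) by push_cast; ring, Real.rpow_natCast]
    norm_num
  have hc4 : 256 / (3:ℝ)^((5:ℝ)/3) * (1-4*τ)^((1:ℝ)/3) = 256*s/9 := by
    rw [hsplit]
    field_simp
    linear_combination -h9
  have hc2 : 16 / (3:ℝ)^((1:ℝ)/3) * (1-4*τ)^((2:ℝ)/3) = 16*s^2/3 := by
    rw [hsplit, h23]
    field_simp
    linear_combination -h3cube
  have hc1 : 32 * (3:ℝ)^((1:ℝ)/3) * (1-4*τ)^((1:ℝ)/3) = 32*s := by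
    rw [hsplit]; ring
  have htC : ((s:ℝ):ℂ)^3 = 3*(1-4*(τ:ℂ)) := by
    exact_mod_cast congrArg (fun y : ℝ => (y:ℂ)) hs3
  have hkey : ∀ z : ℂ, 9*(s:ℂ)^3 * q1 τ z
      = 16 * (16*((s:ℂ)*z)^4 + 8*((s:ℂ)*z)^3 + 3*((3*(1-4*τ):ℝ):ℂ)*((s:ℂ)*z)^2
          - 18*((3*(1-4*τ):ℝ):ℂ)*((s:ℂ)*z)
          + (6*((3*(1-4*τ):ℝ):ℂ)^2 - 9*((3*(1-4*τ):ℝ):ℂ))) := by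
    intro z
    unfold q1
    rw [hc4, hc2, hc1]
    push_cast
    linear_combination (48*(s:ℂ)^2*z^2 - 288*(s:ℂ)*z - 1152*(τ:ℂ) + 144) * htC
  have hs0C : (s:ℂ) ≠ 0 := by exact_mod_cast hspos.ne'
  have h9s : (9:ℂ)*(s:ℂ)^3 ≠ 0 := mul_ne_zero (by norm_num) (pow_ne_zero 3 hs0C)
  obtain ⟨r₁, r₂, w, hne, hwim, hiff⟩ := master (t := 3*(1-4*τ)) h3x (by linarith)
  constructor
  · refine ⟨s⁻¹*r₁, s⁻¹*r₂, ((s⁻¹:ℝ):ℂ)*w, ?_, ?_, ?_⟩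
    · intro h
      exact hne (mul_left_cancel₀ (inv_ne_zero hspos.ne') h)
    · have : (((s⁻¹:ℝ):ℂ)*w).im = s⁻¹ * w.im := by
        simp [Complex.mul_im]
      rw [this]
      exact mul_ne_zero (inv_ne_zero hspos.ne') hwim
    · intro z
      have hchain : q1 τ z = 0 ↔
          ((s:ℂ)*z = (r₁:ℂ) ∨ (s:ℂ)*z = (r₂:ℂ) ∨ (s:ℂ)*z = w ∨
            (s:ℂ)*z = (starRingEnd ℂ) w) := by
        rw [← hiff ((s:ℂ)*z)]
        constructor
        · intro h
          have hk := hkey z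
          rw [h, mul_zero] at hk
          have := mul_eq_zero.mp hk.symm
          rcases this with h' | h'
          · norm_num at h'
          · exact h'
        · intro h
          have hk := hkey z
          rw [h, mul_zero] at hk
          exact (mul_eq_zero.mp hk).resolve_left h9s
      have htr : ∀ a : ℂ, ((s:ℂ)*z = a ↔ z = ((s⁻¹:ℝ):ℂ)*a) := by
        intro a
        push_cast
        constructor
        · intro h; rw [← h]; field_simp
        · intro h; rw [h]; field_simp
      have hconjmul : (starRingEnd ℂ) (((s⁻¹:ℝ):ℂ)*w)
          = ((s⁻¹:ℝ):ℂ) * (starRingEnd ℂ) w := by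
        rw [map_mul, Complex.conj_ofReal]
      rw [hchain, htr, htr, htr, htr, hconjmul]
      push_cast
      tauto
  · have hsb : s * bstar τ = 1 := by
      rw [hsdef, bstar, ← Real.rpow_add h3x]
      norm_num
    have hsbC : (s:ℂ) * ((bstar τ : ℝ):ℂ) = 1 := by
      exact_mod_cast congrArg (fun y : ℝ => (y:ℂ)) hsb
    have hq1b : 9*(s:ℂ)^3 * q1 τ ((bstar τ : ℝ):ℂ) = 96*(1-12*(τ:ℂ))^2 := by
      have hk := hkey ((bstar τ : ℝ):ℂ)
      rw [hsbC] at hk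
      rw [hk]
      push_cast
      ring
    constructor
    · intro h0
      rw [h0, mul_zero] at hq1b
      have hX2 : (1-12*(τ:ℂ))^2 = 0 := by linear_combination (-1/96 : ℂ) * hq1b
      have hX : (1:ℂ)-12*(τ:ℂ) = 0 := by
        exact pow_eq_zero_iff (two_ne_zero) |>.mp hX2
      have h' : (τ:ℂ) = ((1/12:ℝ):ℂ) := by
        push_cast
        linear_combination (-1/12 : ℂ) * hX
      exact Complex.ofReal_inj.mp h'
    · intro h
      have hz : (96:ℂ)*(1-12*(τ:ℂ))^2 = 0 := by
        rw [h]; norm_num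
      rw [hz] at hq1b
      exact (mul_eq_zero.mp hq1b).resolve_left h9s
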